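/- Let H be the CDF of an atomless Borel probability measure on [0, M], let q̂ > 0 and μ ∈ (0, M). For s ∈ ℝ set x1(s) = 2s − μ and x2(s) = 2s − μ + 2q̂, and let y_s(θ) = θ²/2 for θ ≤ x1(s), y_s(θ) = x1(s)²/2 + s·(θ − x1(s)) for x1(s) ≤ θ ≤ x2(s), and y_s(θ) = θ²/2 − q̂·(θ − μ) for θ ≥ x2(s). Then the function S(s) = ∫_{[0,M]} y_s(θ) dH(θ) is differentiable, with S′(s) = ∫_{[x1(s), x2(s)] ∩ [0,M]} (θ − μ) dH(θ). Consequently, any interior minimizer s of S satisfies ∫_{x1(s)}^{x2(s)} (θ − μ) dH(θ) = 0. -/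

import Mathlib

open MeasureTheory

lemma clamp_lip (c d a b : ℝ) : |max (min a c) d - max (min b c) d| ≤ |a - b| := by
  calc |max (min a c) d - max (min b c) d| ≤ |min a c - min b c| :=
        abs_max_sub_max_le_abs _ _ _
    _ ≤ max |a - b| |c - c| := abs_min_sub_min_le_max _ _ _ _
    _ ≤ |a - b| := by simp

/-- With `H` the CDF of an atomless Borel probability measure `ρ`
on `[0,M]`, `x1(s) = 2s−μ`, `x2(s) = 2s−μ+2q̂`, and the convex supporting
function `y_s`, the map `S(s) = ∫ y_s dρ` is differentiable with
`S′(s) = ∫_{[x1(s),x2(s)] ∩ [0,M]} (θ−μ) dρ`; hence any interior (local)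
minimizer `s` satisfies `∫_{x1(s)}^{x2(s)} (θ−μ) dρ = 0`. -/
theorem stmt_10 (M : ℝ) (hM : 0 < M)
    (ρ : Measure ℝ) [IsProbabilityMeasure ρ]
    (hρs : ρ (Set.Icc 0 M)ᶜ = 0) (hatomless : ∀ x : ℝ, ρ {x} = 0)
    (H : ℝ → ℝ) (hH : ∀ v, H v = (ρ (Set.Iic v)).toReal)
    (qhat μ : ℝ) (hq : 0 < qhat) (hμ : μ ∈ Set.Ioo 0 M)
    (x1 x2 : ℝ → ℝ)
    (hx1 : ∀ s, x1 s = 2 * s - μ)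
    (hx2 : ∀ s, x2 s = 2 * s - μ + 2 * qhat)
    (y : ℝ → ℝ → ℝ)
    (hy : ∀ s θ, y s θ = if θ ≤ x1 s then θ ^ 2 / 2
      else if θ ≤ x2 s then (x1 s) ^ 2 / 2 + s * (θ - x1 s)
      else θ ^ 2 / 2 - qhat * (θ - μ))
    (S : ℝ → ℝ) (hS : ∀ s, S s = ∫ θ, y s θ ∂ρ) :
    (∀ s, HasDerivAt S
      (∫ θ in Set.Icc (x1 s) (x2 s) ∩ Set.Icc 0 M, (θ - μ) ∂ρ) s) ∧
    (∀ s, IsLocalMin S s → (∫ θ in Set.Icc (x1 s) (x2 s), (θ - μ) ∂ρ) = 0) := by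
  obtain ⟨hμ0, hμM⟩ := hμ
  -- closed form for y
  have key : ∀ s θ, y s θ = θ ^ 2 / 2 - qhat * (θ - μ)
      + (θ - μ) * (max (min s ((θ + μ) / 2)) ((θ + μ) / 2 - qhat)
        - ((θ + μ) / 2 - qhat)) := by
    intro s θ
    rw [hy s θ, hx1 s, hx2 s]
    split_ifs with h1 h2
    · rw [min_eq_right (by linarith), max_eq_left (by linarith)]
      ring
    · rw [min_eq_left (by linarith), max_eq_left (by linarith)]
      ring
    · rw [min_eq_left (by linarith), max_eq_right (by linarith)]
      ring
  have hmem : ∀ᵐ θ ∂ρ, θ ∈ Set.Icc (0:ℝ) M := by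
    rw [MeasureTheory.ae_iff]
    exact hρs
  have hne : ∀ c : ℝ, ∀ᵐ θ ∂ρ, θ ≠ c := by
    intro c
    rw [MeasureTheory.ae_iff]
    convert hatomless c using 2
    ext θ; simp
  have hcont : ∀ s, Continuous (fun θ => y s θ) := by
    intro s
    have : (fun θ => y s θ) = fun θ => θ ^ 2 / 2 - qhat * (θ - μ)
        + (θ - μ) * (max (min s ((θ + μ) / 2)) ((θ + μ) / 2 - qhat)
          - ((θ + μ) / 2 - qhat)) := funext (key s)
    rw [this]
    fun_prop
  have hres : ρ.restrict (Set.Icc 0 M) = ρ :=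
    Measure.restrict_eq_self_of_ae_mem hmem
  have hint : ∀ s, Integrable (fun θ => y s θ) ρ := by
    intro s
    rw [← hres]
    exact (hcont s).continuousOn.integrableOn_compact isCompact_Icc
  have hderiv : ∀ s₀, HasDerivAt S
      (∫ θ in Set.Icc (x1 s₀) (x2 s₀) ∩ Set.Icc 0 M, (θ - μ) ∂ρ) s₀ := by
    intro s₀
    have hAmeas : MeasurableSet (Set.Icc (x1 s₀) (x2 s₀) ∩ Set.Icc (0:ℝ) M) :=
      measurableSet_Icc.inter measurableSet_Icc
    have hF'meas : AEStronglyMeasurable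
        ((Set.Icc (x1 s₀) (x2 s₀) ∩ Set.Icc (0:ℝ) M).indicator (fun θ => θ - μ)) ρ :=
      ((measurable_id.sub_const μ).indicator hAmeas).aestronglyMeasurable
    have hlip : ∀ᵐ θ ∂ρ, LipschitzOnWith (Real.nnabs M) (fun s => y s θ)
        (Metric.ball s₀ 1) := by
      filter_upwards [hmem] with θ hθ
      apply LipschitzWith.lipschitzOnWith
      rw [lipschitzWith_iff_dist_le_mul]
      intro a b
      rw [Real.dist_eq, Real.dist_eq, key a θ, key b θ]
      have habs : |θ - μ| ≤ M := by
        rw [abs_le]; exact ⟨by linarith [hθ.1], by linarith [hθ.2]⟩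
      have h1 := clamp_lip ((θ + μ) / 2) ((θ + μ) / 2 - qhat) a b
      have hM' : (Real.nnabs M : ℝ) = M := by
        simp [Real.coe_nnabs, abs_of_pos hM]
      rw [hM']
      calc |θ ^ 2 / 2 - qhat * (θ - μ) + (θ - μ) *
              (max (min a ((θ + μ) / 2)) ((θ + μ) / 2 - qhat) - ((θ + μ) / 2 - qhat))
            - (θ ^ 2 / 2 - qhat * (θ - μ) + (θ - μ) *
              (max (min b ((θ + μ) / 2)) ((θ + μ) / 2 - qhat) - ((θ + μ) / 2 - qhat)))|
          = |θ - μ| * |max (min a ((θ + μ) / 2)) ((θ + μ) / 2 - qhat)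
              - max (min b ((θ + μ) / 2)) ((θ + μ) / 2 - qhat)| := by
            rw [← abs_mul]; ring_nf
        _ ≤ M * |a - b| := by
            apply mul_le_mul habs h1 (abs_nonneg _) (le_of_lt hM)
    have hdiff : ∀ᵐ θ ∂ρ, HasDerivAt (fun s => y s θ)
        ((Set.Icc (x1 s₀) (x2 s₀) ∩ Set.Icc (0:ℝ) M).indicator (fun θ => θ - μ) θ) s₀ := by
      filter_upwards [hmem, hne (x1 s₀), hne (x2 s₀)] with θ hθ h1 h2
      rcases lt_trichotomy s₀ ((θ + μ) / 2 - qhat) with hc | hc | hc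
      · -- θ > x2 s₀, y constant near s₀
        have hind : (Set.Icc (x1 s₀) (x2 s₀) ∩ Set.Icc (0:ℝ) M).indicator
            (fun θ => θ - μ) θ = 0 := by
          apply Set.indicator_of_notMem
          intro hm
          have := hm.1.2
          rw [hx2] at this
          linarith
        rw [hind]
        have hev : (fun s => y s θ) =ᶠ[nhds s₀]
            fun _ => θ ^ 2 / 2 - qhat * (θ - μ) := by
          filter_upwards [Iio_mem_nhds hc] with s hs
          rw [key s θ, min_eq_left (by simp at hs; linarith),
            max_eq_right (by simp at hs; linarith)]
          ring
        exact (hasDerivAt_const s₀ _).congr_of_eventuallyEq hev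
      · exfalso
        apply h2
        rw [hx2]
        linarith
      · rcases lt_trichotomy s₀ ((θ + μ) / 2) with hd | hd | hd
        · -- middle region
          have hind : (Set.Icc (x1 s₀) (x2 s₀) ∩ Set.Icc (0:ℝ) M).indicator
              (fun θ => θ - μ) θ = θ - μ := by
            apply Set.indicator_of_mem
            refine ⟨⟨?_, ?_⟩, hθ⟩
            · rw [hx1]; linarith
            · rw [hx2]; linarith
          rw [hind]
          have hmain : HasDerivAt (fun s : ℝ => θ ^ 2 / 2 - qhat * (θ - μ)
              + (θ - μ) * (s - ((θ + μ) / 2 - qhat))) (θ - μ) s₀ := by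
            have h := (((hasDerivAt_id' (x := s₀)).sub_const
              ((θ + μ) / 2 - qhat)).const_mul (θ - μ)).const_add
              (θ ^ 2 / 2 - qhat * (θ - μ))
            simpa using h
          apply hmain.congr_of_eventuallyEq
          filter_upwards [Ioo_mem_nhds hc hd] with s hs
          rw [key s θ, min_eq_left hs.2.le, max_eq_left hs.1.le]
        · exfalso
          apply h1
          rw [hx1]
          linarith
        · -- θ < x1 s₀, y constant near s₀
          have hind : (Set.Icc (x1 s₀) (x2 s₀) ∩ Set.Icc (0:ℝ) M).indicator
              (fun θ => θ - μ) θ = 0 := by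
            apply Set.indicator_of_notMem
            intro hm
            have := hm.1.1
            rw [hx1] at this
            linarith
          rw [hind]
          have hev : (fun s => y s θ) =ᶠ[nhds s₀]
              fun _ => θ ^ 2 / 2 - qhat * (θ - μ) + (θ - μ) * qhat := by
            filter_upwards [Ioi_mem_nhds hd] with s hs
            rw [key s θ, min_eq_right (by simp at hs; linarith),
              max_eq_left (by linarith)]
            ring
          exact (hasDerivAt_const s₀ _).congr_of_eventuallyEq hev
    obtain ⟨-, h⟩ := hasDerivAt_integral_of_dominated_loc_of_lip (Metric.ball_mem_nhds s₀ zero_lt_one)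
      (Filter.Eventually.of_forall fun s => (hcont s).aestronglyMeasurable)
      (hint s₀) hF'meas hlip (integrable_const M) hdiff
    rw [integral_indicator hAmeas] at h
    have hSfun : S = fun s => ∫ θ, y s θ ∂ρ := funext hS
    rw [hSfun]
    exact h
  refine ⟨hderiv, ?_⟩
  intro s hmin
  have h0 := hmin.hasDerivAt_eq_zero (hderiv s)
  have heq : Set.Icc (x1 s) (x2 s)
      =ᵐ[ρ] (Set.Icc (x1 s) (x2 s) ∩ Set.Icc 0 M : Set ℝ) := by
    rw [MeasureTheory.ae_eq_set]
    constructor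
    · apply measure_mono_null _ hρs
      intro θ hθ
      exact fun hB => hθ.2 ⟨hθ.1, hB⟩
    · apply measure_mono_null _ (measure_empty (μ := ρ))
      intro θ hθ
      exact (hθ.2 hθ.1.1).elim
  rw [setIntegral_congr_set heq]
  exact h0
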